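/- There exists ε₀* > 0 depending only on v, d, τ, γ such that for all 0 < ε₀ ≤ ε₀* and all 0 < ε ≤ ε₀ the following holds. There exists μ ∈ {0, 1/2} such that every c₁ ∈ Q₁ satisfies ‖θ* + c₁·ω + μ‖ ≤ 3δ₀^{1/2}. -/

import Mathlib

open scoped InnerProductSpace

/-- `‖t‖`: the distance from a real number `t` to the nearest integer. -/
noncomputable def distToInt (t : ℝ) : ℝ := |t - round t|

/-- The ℓ¹ norm `‖x‖₁ = Σᵢ |xᵢ|` on `ℤ^d`. -/
def nrm1 {d : ℕ} (x : Fin d → ℤ) : ℤ := ∑ i, |x i|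

/-- The dot product `x·ω` for `x ∈ ℤ^d`, `ω ∈ ℝ^d`. -/
noncomputable def dotw {d : ℕ} (x : Fin d → ℤ) (ω : Fin d → ℝ) : ℝ := ∑ i, (x i : ℝ) * ω i

/-- The ℓ¹ norm on `ℝ^d`. -/
noncomputable def nrm1R {d : ℕ} (x : Fin d → ℝ) : ℝ := ∑ i, |x i|

/-- The dot product on `ℝ^d`. -/
noncomputable def dotwR {d : ℕ} (x ω : Fin d → ℝ) : ℝ := ∑ i, x i * ω i

/-- The standing hypotheses on the `C²`-cosine like potential `v` with parameter `a`:
`v` is `C²`, even and `1`-periodic, `0` is a nondegenerate maximum, `1/2` is a nondegenerate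
minimum, these are the only critical points modulo `1`, `|v''| > 3` near `0` and `1/2`
(within distance `a`), and `|v'| > 3` away from `0` and `1/2`. -/
structure CosLike (v : ℝ → ℝ) (a : ℝ) : Prop where
  smooth : ContDiff ℝ 2 v
  even : ∀ θ, v (-θ) = v θ
  periodic : ∀ θ, v (θ + 1) = v θ
  a_pos : 0 < a
  a_lt : a < 1 / 10
  critMax : deriv v 0 = 0
  critMax' : deriv (deriv v) 0 < 0
  critMin : deriv v (1 / 2) = 0
  critMin' : 0 < deriv (deriv v) (1 / 2)
  onlyCrit : ∀ θ ∈ Set.Ico (0 : ℝ) 1, deriv v θ = 0 → θ = 0 ∨ θ = 1 / 2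
  deriv2_big : ∀ θ, (distToInt θ < a ∨ distToInt (θ - 1 / 2) < a) → 3 < |deriv (deriv v) θ|
  deriv_big : ∀ θ, a ≤ distToInt θ → a ≤ distToInt (θ - 1 / 2) → 3 < |deriv v θ|

/-- `M₁ = sup_θ max(|v(θ)|, |v'(θ)|, |v''(θ)|)`. -/
noncomputable def M1 (v : ℝ → ℝ) : ℝ :=
  ⨆ θ : ℝ, max |v θ| (max |deriv v θ| |deriv (deriv v) θ|)

/-- The finite-volume Schrödinger operator `H_Λ(θ) = ε Δ + v(θ + x·ω) δ_{x,y}` as a matrix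
indexed by a finite set `Λ ⊂ ℤ^d`. -/
noncomputable def Hmat {d : ℕ} (ε : ℝ) (v : ℝ → ℝ) (ω : Fin d → ℝ) (θ : ℝ)
    (Λ : Finset (Fin d → ℤ)) : Matrix Λ Λ ℝ :=
  Matrix.of fun x y =>
    if nrm1 (x.1 - y.1) = 1 then ε
    else if x = y then v (θ + dotw x.1 ω) else 0

/-- The discrete ℓ¹-ball `{x ∈ ℤ^d : ‖x − c‖₁ ≤ r}` as a `Finset`. -/
noncomputable def ball1 {d : ℕ} (c : Fin d → ℤ) (r : ℝ) : Finset (Fin d → ℤ) :=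
  (Finset.Icc (fun i => c i - ⌈r⌉) (fun i => c i + ⌈r⌉)).filter
    fun x => ((nrm1 (x - c) : ℤ) : ℝ) ≤ r

/-- The discrete ℓ¹-ball around a (possibly non-integer) center `c ∈ ℝ^d`. -/
noncomputable def ballR {d : ℕ} (c : Fin d → ℝ) (r : ℝ) : Finset (Fin d → ℤ) :=
  (Finset.Icc (fun i => ⌊c i - r⌋ - 1) (fun i => ⌈c i + r⌉ + 1)).filter
    fun x => nrm1R (fun i => (x i : ℝ) - c i) ≤ r

/-- The nearest neighbours of `x` in `ℤ^d`. -/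
noncomputable def nbrs {d : ℕ} (x : Fin d → ℤ) : Finset (Fin d → ℤ) :=
  (Finset.Icc (fun i => x i - 1) (fun i => x i + 1)).filter fun y => nrm1 (y - x) = 1

/-- `δ₀ = ε₀^{1/20}`. -/
noncomputable def delta0 (ε₀ : ℝ) : ℝ := ε₀ ^ ((1 : ℝ) / 20)

/-- `l₁ = |log ε₀|⁴` (Case 2 of the first step). -/
noncomputable def ell1' (ε₀ : ℝ) : ℝ := |Real.log ε₀| ^ 4

/-- `δ₁ = e^{−l₁^{2/3}}`. -/
noncomputable def delta1' (ε₀ : ℝ) : ℝ := Real.exp (-(ell1' ε₀ ^ ((2 : ℝ) / 3)))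
lemma per_int {f : ℝ → ℝ} (hf : ∀ x, f (x + 1) = f x) (x : ℝ) (k : ℤ) : f (x + k) = f x := by
  have hper : Function.Periodic f 1 := hf
  simpa using (hper.int_mul k) x

section vlem
variable {v : ℝ → ℝ} {a : ℝ} (hv : CosLike v a)

lemma vdiff (hv : CosLike v a) : Differentiable ℝ v :=
  hv.smooth.differentiable (by norm_num)

lemma vd1 (hv : CosLike v a) : ContDiff ℝ 1 (deriv v) := by
  have h2 : ContDiff ℝ ((1 : ℕ) + 1) v := by exact_mod_cast hv.smooth
  exact (contDiff_succ_iff_deriv.mp h2).2.2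

lemma vdc (hv : CosLike v a) : Continuous (deriv v) := (vd1 hv).continuous

lemma deriv_per (hv : CosLike v a) : ∀ x, deriv v (x + 1) = deriv v x := by
  intro x
  have h1 : HasDerivAt v (deriv v (x + 1)) (x + 1) := (vdiff hv (x + 1)).hasDerivAt
  have h2 : HasDerivAt (fun y => v (y + 1)) (deriv v (x + 1) * 1) x :=
    h1.comp x ((hasDerivAt_id x).add_const 1)
  have h3 : (fun y : ℝ => v (y + 1)) = v := funext hv.periodic
  rw [h3, mul_one] at h2
  exact (h2.deriv).symm

lemma v_int (hv : CosLike v a) (x : ℝ) (k : ℤ) : v (x + k) = v x := per_int hv.periodic x k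

lemma v_half (hv : CosLike v a) (s : ℝ) : v (1 / 2 + s) = v (1 / 2 - s) := by
  calc v (1 / 2 + s) = v (-(1 / 2 + s)) := (hv.even _).symm
    _ = v (-(1 / 2 + s) + 1) := (hv.periodic _).symm
    _ = v (1 / 2 - s) := by ring_nf

lemma exists_lip (hv : CosLike v a) : ∃ K : ℝ, 1 ≤ K ∧ ∀ p q : ℝ, |v p - v q| ≤ K * |p - q| := by
  obtain ⟨z, hz, hmax⟩ := isCompact_Icc.exists_isMaxOn (Set.nonempty_Icc.mpr (by norm_num))
    ((continuous_abs.comp (vdc hv)).continuousOn :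
      ContinuousOn (fun y => |deriv v y|) (Set.Icc (0:ℝ) 1))
  refine ⟨max 1 |deriv v z|, le_max_left _ _, ?_⟩
  have hbound : ∀ θ : ℝ, |deriv v θ| ≤ max 1 |deriv v z| := by
    intro θ
    have hfr : deriv v (Int.fract θ + (⌊θ⌋ : ℤ)) = deriv v (Int.fract θ) :=
      per_int (deriv_per hv) _ _
    have hθ : Int.fract θ + (⌊θ⌋ : ℤ) = θ := by
      rw [add_comm]; exact Int.floor_add_fract θ
    rw [hθ] at hfr
    rw [hfr]
    refine le_trans (hmax ⟨Int.fract_nonneg θ, (Int.fract_lt_one θ).le⟩) (le_max_right _ _)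
  intro p q
  have := Convex.norm_image_sub_le_of_norm_deriv_le (𝕜 := ℝ) (f := v) (s := Set.univ)
    (fun x _ => vdiff hv x)
    (fun x _ => hbound x) convex_univ (Set.mem_univ q) (Set.mem_univ p)
  simpa [Real.norm_eq_abs] using this

lemma deriv_neg_on (hv : CosLike v a) : ∀ θ ∈ Set.Ioo (0:ℝ) (1/2), deriv v θ < 0 := by
  have hcont := vdc hv
  -- find x0 ∈ (0,1/2) with deriv v x0 < 0
  have hsl : Filter.Tendsto (slope (deriv v) 0) (nhdsWithin 0 {(0:ℝ)}ᶜ)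
      (nhds (deriv (deriv v) 0)) :=
    hasDerivAt_iff_tendsto_slope.mp ((vd1 hv).differentiable (by norm_num) 0).hasDerivAt
  have hsl2 : Filter.Tendsto (slope (deriv v) 0) (nhdsWithin 0 (Set.Ioi 0))
      (nhds (deriv (deriv v) 0)) :=
    hsl.mono_left (nhdsWithin_mono 0 (fun y hy => ne_of_gt hy))
  have hev1 : ∀ᶠ y in nhdsWithin (0:ℝ) (Set.Ioi 0), slope (deriv v) 0 y < 0 :=
    Filter.Tendsto.eventually_lt_const hv.critMax' hsl2
  have hev2 : ∀ᶠ y in nhdsWithin (0:ℝ) (Set.Ioi 0), y ∈ Set.Ioo (0:ℝ) (1/2) := by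
    have : Set.Ioo (0:ℝ) (1/2) ∈ nhdsWithin (0:ℝ) (Set.Ioi 0) :=
      Ioo_mem_nhdsGT_of_mem ⟨le_refl _, by norm_num⟩
    exact this
  obtain ⟨x0, hx0s, hx0m⟩ := (hev1.and hev2).exists
  have hx0 : deriv v x0 < 0 := by
    have hs : slope (deriv v) 0 x0 = deriv v x0 / x0 := by
      simp [slope, hv.critMax]
      ring
    rw [hs] at hx0s
    by_contra hge
    push_neg at hge
    exact absurd hx0s (not_lt.mpr (div_nonneg hge hx0m.1.le))
  -- main
  intro θ hθ
  rcases lt_trichotomy (deriv v θ) 0 with h | h | h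
  · exact h
  · exfalso
    rcases hv.onlyCrit θ ⟨hθ.1.le, by nlinarith [hθ.2]⟩ h with h' | h'
    · exact absurd h' (ne_of_gt hθ.1)
    · exact absurd h' (ne_of_lt hθ.2)
  · exfalso
    rcases lt_trichotomy x0 θ with hc | hc | hc
    · have : (0:ℝ) ∈ Set.Ioo (deriv v x0) (deriv v θ) := ⟨hx0, h⟩
      obtain ⟨ξ, hξm, hξ⟩ := intermediate_value_Ioo hc.le hcont.continuousOn this
      rcases hv.onlyCrit ξ ⟨by nlinarith [hξm.1, hx0m.1], by nlinarith [hξm.2, hθ.2]⟩ hξ with h' | h'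
      · nlinarith [hξm.1, hx0m.1]
      · nlinarith [hξm.2, hθ.2]
    · rw [hc] at hx0; linarith
    · have : (0:ℝ) ∈ Set.Ioo (deriv v x0) (deriv v θ) := ⟨hx0, h⟩
      obtain ⟨ξ, hξm, hξ⟩ := intermediate_value_Ioo' hc.le hcont.continuousOn this
      rcases hv.onlyCrit ξ ⟨by nlinarith [hξm.1, hθ.1], by nlinarith [hξm.2, hx0m.2]⟩ hξ with h' | h'
      · nlinarith [hξm.1, hθ.1]
      · nlinarith [hξm.2, hx0m.2]

lemma deriv_lt_neg3 (hv : CosLike v a) {θ : ℝ} (h1 : 1/8 ≤ θ) (h2 : θ ≤ 3/8) :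
    deriv v θ < -3 := by
  have hneg : deriv v θ < 0 := deriv_neg_on hv θ ⟨by linarith, by linarith⟩
  have hr1 : round θ = 0 := by
    rw [round_eq, Int.floor_eq_zero_iff]
    constructor <;> [linarith; linarith]
  have hr2 : round (θ - 1/2) = 0 := by
    rw [round_eq, Int.floor_eq_zero_iff]
    constructor <;> [linarith; linarith]
  have hd1 : distToInt θ = θ := by
    unfold distToInt; rw [hr1]; rw [abs_of_nonneg (by push_cast; linarith)]
    push_cast; ring
  have hd2 : distToInt (θ - 1/2) = 1/2 - θ := by
    unfold distToInt; rw [hr2]; rw [abs_of_nonpos (by push_cast; linarith)]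
    push_cast; ring
  have := hv.deriv_big θ (by rw [hd1]; linarith [hv.a_lt]) (by rw [hd2]; linarith [hv.a_lt])
  rw [abs_of_neg hneg] at this
  linarith

lemma slope38 (hv : CosLike v a) {p q : ℝ} (h1 : 1/8 ≤ p) (h2 : p ≤ q) (h3 : q ≤ 3/8) :
    3 * (q - p) ≤ v p - v q := by
  rcases eq_or_lt_of_le h2 with rfl | hlt
  · simp
  have hanti : StrictAntiOn (fun θ : ℝ => v θ + 3 * θ) (Set.Icc (1/8 : ℝ) (3/8)) := by
    have hvc := (vdiff hv).continuous
    refine strictAntiOn_of_deriv_neg (convex_Icc _ _) (Continuous.continuousOn (by fun_prop)) ?_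
    intro x hx
    rw [interior_Icc] at hx
    have hd : HasDerivAt (fun θ : ℝ => v θ + 3 * θ) (deriv v x + 3) x := by
      have := (vdiff hv x).hasDerivAt.add ((hasDerivAt_id x).const_mul (3:ℝ))
      rw [mul_one] at this; exact this
    rw [hd.deriv]
    linarith [deriv_lt_neg3 hv hx.1.le hx.2.le]
  have := hanti ⟨h1, by linarith⟩ ⟨by linarith, h3⟩ hlt
  simp only at this
  linarith

lemma vanti (hv : CosLike v a) : AntitoneOn v (Set.Icc (0:ℝ) (1/2)) := by
  apply antitoneOn_of_deriv_nonpos (convex_Icc _ _) (vdiff hv).continuous.continuousOn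
    (vdiff hv).differentiableOn
  intro x hx
  rw [interior_Icc] at hx
  exact (deriv_neg_on hv x hx).le

end vlem

lemma distToInt_le (x : ℝ) (k : ℤ) : distToInt x ≤ |x - k| := round_le x k

section vlem2
variable {v : ℝ → ℝ} {a : ℝ}

lemma quarter (hv : CosLike v a) (b η : ℝ) (hη : η < 3/4)
    (h : |v (b/2) - v (1/2 + b/2)| ≤ η) : distToInt (2*b) ≤ η := by
  have hη0 : 0 ≤ η := le_trans (abs_nonneg _) h
  set f := Int.fract (b/2) with hfdef
  have hf0 : 0 ≤ f := Int.fract_nonneg _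
  have hf1 : f < 1 := Int.fract_lt_one _
  have hbf : b/2 = (⌊b/2⌋ : ℝ) + f := (Int.floor_add_fract (b/2)).symm
  have key : ∀ s : ℝ, 0 ≤ s → s ≤ 1/2 → |v s - v (1/2 - s)| ≤ η → |4*s - 1| ≤ (2/3)*η := by
    intro s hs0 hs12 hs
    have hgap : (3:ℝ)/4 ≤ v (1/8) - v (3/8) := by
      linarith [slope38 hv (p := 1/8) (q := 3/8) (by norm_num) (by norm_num) (by norm_num)]
    by_cases h18 : s < 1/8
    · exfalso
      have ha1 : v (1/8) ≤ v s :=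
        vanti hv ⟨hs0, hs12⟩ ⟨by norm_num, by norm_num⟩ h18.le
      have ha2 : v (1/2 - s) ≤ v (3/8) :=
        vanti hv ⟨by norm_num, by linarith⟩ ⟨by linarith, by linarith⟩ (by linarith)
      have := le_trans (le_abs_self _) hs
      linarith
    by_cases h38 : 3/8 < s
    · exfalso
      have ha1 : v (1/8) ≤ v (1/2 - s) :=
        vanti hv ⟨by linarith, by linarith⟩ ⟨by norm_num, by norm_num⟩ (by linarith)
      have ha2 : v s ≤ v (3/8) :=
        vanti hv ⟨by norm_num, by norm_num⟩ ⟨by linarith, hs12⟩ h38.le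
      have := le_trans (neg_abs_le _) hs
      have h' := (abs_le.mp hs).1
      linarith
    push_neg at h18 h38
    rcases le_total s (1/4) with hc | hc
    · have hsl := slope38 hv (p := s) (q := 1/2 - s) h18 (by linarith) (by linarith)
      have h2 := le_trans (le_abs_self _) hs
      rw [abs_le]
      constructor <;> linarith
    · have hsl := slope38 hv (p := 1/2 - s) (q := s) (by linarith) (by linarith) h38
      have h2 := (abs_le.mp hs).1
      rw [abs_le]
      constructor <;> linarith
  rcases le_or_gt f (1/2) with hf2 | hf2
  · have hv1 : v f = v (b/2) := by
      rw [hbf, add_comm]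
      exact (v_int hv f ⌊b/2⌋).symm
    have hv2 : v (1/2 - f) = v (1/2 + b/2) := by
      rw [hbf, show (1:ℝ)/2 + ((⌊b/2⌋:ℝ) + f) = (1/2 + f) + (⌊b/2⌋:ℝ) by ring,
        v_int hv (1/2 + f) ⌊b/2⌋, v_half hv f]
    have hk := key f hf0 hf2 (by rw [hv1, hv2]; exact h)
    calc distToInt (2*b) ≤ |2*b - ((4*⌊b/2⌋ + 1 : ℤ):ℝ)| := distToInt_le _ _
      _ = |4*f - 1| := by
          have h2b : 2*b = 4*((⌊b/2⌋:ℤ):ℝ) + 4*f := by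
            have : b = 2*((⌊b/2⌋:ℤ):ℝ) + 2*f := by linarith [hbf]
            linarith
          push_cast
          rw [show 2*b - (4*((⌊b/2⌋:ℤ):ℝ) + 1) = 4*f - 1 from by linarith]
      _ ≤ (2/3)*η := hk
      _ ≤ η := by linarith
  · have hv1 : v (1 - f) = v (b/2) := by
      have e1 : v (1 - f) = v (f - 1) := by
        rw [← hv.even (1 - f)]; ring_nf
      have e2 : v (f - 1) = v f := by
        have := v_int hv (f - 1) 1; push_cast at this; rw [← this]; ring_nf
      rw [e1, e2, hbf, add_comm]
      exact (v_int hv f ⌊b/2⌋).symm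
    have hv2 : v (1/2 - (1 - f)) = v (1/2 + b/2) := by
      have e1 : (1:ℝ)/2 - (1 - f) = -(1/2 - f) := by ring
      have e2 : v (1/2 - (1 - f)) = v (1/2 - f) := by rw [e1, hv.even]
      have e3 : v (1/2 - f) = v (1/2 + f) := (v_half hv f).symm
      rw [e2, e3, hbf, show (1:ℝ)/2 + ((⌊b/2⌋:ℝ) + f) = (1/2 + f) + (⌊b/2⌋:ℝ) by ring,
        v_int hv (1/2 + f) ⌊b/2⌋]
    have hk := key (1 - f) (by linarith) (by linarith) (by rw [hv1, hv2]; exact h)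
    calc distToInt (2*b) ≤ |2*b - ((4*⌊b/2⌋ + 3 : ℤ):ℝ)| := distToInt_le _ _
      _ = |4*(1-f) - 1| := by
          have h2b : 2*b = 4*((⌊b/2⌋:ℤ):ℝ) + 4*f := by
            have : b = 2*((⌊b/2⌋:ℤ):ℝ) + 2*f := by linarith [hbf]
            linarith
          push_cast
          rw [show 2*b - (4*((⌊b/2⌋:ℤ):ℝ) + 3) = -(4*(1-f) - 1) from by linarith,
            abs_neg]
      _ ≤ (2/3)*η := hk
      _ ≤ η := by linarith

lemma value0 (hv : CosLike v a) {K : ℝ} (hK0 : 0 ≤ K) (hlip : ∀ p q : ℝ, |v p - v q| ≤ K * |p - q|)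
    {Es δ r t b y : ℝ} (hy : |v y - Es| < δ) (hcase : y = t - b/2 ∨ y = t + b/2)
    (ht : distToInt t ≤ r) : |v (b/2) - Es| ≤ δ + K * r := by
  set k := round t with hk
  have he : |t - (k:ℝ)| ≤ r := ht
  have hyk : v y = v (y - (k:ℝ)) := by
    rw [← v_int hv (y - (k:ℝ)) k]; ring_nf
  have hvb : |v (b/2) - v y| ≤ K * r := by
    rcases hcase with rfl | rfl
    · have h1 : v (t - b/2 - (k:ℝ)) = v (b/2 - (t - (k:ℝ))) := by
        rw [← hv.even (t - b/2 - (k:ℝ))]; ring_nf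
      rw [hyk, h1]
      calc |v (b/2) - v (b/2 - (t - (k:ℝ)))| ≤ K * |b/2 - (b/2 - (t - (k:ℝ)))| := hlip _ _
        _ = K * |t - (k:ℝ)| := by ring_nf
        _ ≤ K * r := mul_le_mul_of_nonneg_left he hK0
    · rw [hyk]
      calc |v (b/2) - v (t + b/2 - (k:ℝ))| ≤ K * |b/2 - (t + b/2 - (k:ℝ))| := hlip _ _
        _ = K * |t - (k:ℝ)| := by rw [show b/2 - (t + b/2 - (k:ℝ)) = -(t - (k:ℝ)) by ring, abs_neg]
        _ ≤ K * r := mul_le_mul_of_nonneg_left he hK0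
  calc |v (b/2) - Es| ≤ |v (b/2) - v y| + |v y - Es| := abs_sub_le _ _ _
    _ ≤ K * r + δ := add_le_add hvb hy.le
    _ = δ + K * r := by ring

lemma value_half (hv : CosLike v a) {K : ℝ} (hK0 : 0 ≤ K) (hlip : ∀ p q : ℝ, |v p - v q| ≤ K * |p - q|)
    {Es δ r t b y : ℝ} (hy : |v y - Es| < δ) (hcase : y = t - b/2 ∨ y = t + b/2)
    (ht : distToInt (t + 1/2) ≤ r) : |v (1/2 + b/2) - Es| ≤ δ + K * r := by
  set k := round (t + 1/2) with hk
  have he : |t + 1/2 - (k:ℝ)| ≤ r := ht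
  have hyk : v y = v (y - (k:ℝ)) := by
    rw [← v_int hv (y - (k:ℝ)) k]; ring_nf
  have hvb : |v (1/2 + b/2) - v y| ≤ K * r := by
    rcases hcase with rfl | rfl
    · have h1 : v (1/2 + b/2) = v (-(1/2 + b/2)) := (hv.even _).symm
      rw [hyk, h1]
      calc |v (-(1/2 + b/2)) - v (t - b/2 - (k:ℝ))|
          ≤ K * |(-(1/2 + b/2)) - (t - b/2 - (k:ℝ))| := hlip _ _
        _ = K * |t + 1/2 - (k:ℝ)| := by
            rw [show (-(1/2 + b/2)) - (t - b/2 - (k:ℝ)) = -(t + 1/2 - (k:ℝ)) by ring, abs_neg]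
        _ ≤ K * r := mul_le_mul_of_nonneg_left he hK0
    · have h1 : v (1/2 + b/2) = v (-(1/2 - b/2)) := by
        rw [hv.even, v_half hv]
      rw [hyk, h1]
      calc |v (-(1/2 - b/2)) - v (t + b/2 - (k:ℝ))|
          ≤ K * |(-(1/2 - b/2)) - (t + b/2 - (k:ℝ))| := hlip _ _
        _ = K * |t + 1/2 - (k:ℝ)| := by
            rw [show (-(1/2 - b/2)) - (t + b/2 - (k:ℝ)) = -(t + 1/2 - (k:ℝ)) by ring, abs_neg]
        _ ≤ K * r := mul_le_mul_of_nonneg_left he hK0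
  calc |v (1/2 + b/2) - Es| ≤ |v (1/2 + b/2) - v y| + |v y - Es| := abs_sub_le _ _ _
    _ ≤ K * r + δ := add_le_add hvb hy.le
    _ = δ + K * r := by ring

end vlem2

lemma parity_dichotomy (t r : ℝ) (h : distToInt (2 * t) ≤ 2 * r) :
    distToInt t ≤ r ∨ distToInt (t + 1 / 2) ≤ r := by
  unfold distToInt at h
  rcases Int.even_or_odd (round (2 * t)) with ⟨j, hj⟩ | ⟨j, hj⟩
  · left
    refine le_trans (distToInt_le t j) ?_
    rw [hj] at h
    have h2 : |2 * (t - (j : ℝ))| ≤ 2 * r := by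
      convert h using 2
      push_cast
      ring
    rw [abs_mul] at h2
    simp only [abs_two] at h2
    linarith
  · right
    refine le_trans (distToInt_le (t + 1 / 2) (j + 1)) ?_
    rw [hj] at h
    have h2 : |2 * (t + 1 / 2 - ((j : ℝ) + 1))| ≤ 2 * r := by
      convert h using 2
      push_cast
      ring
    rw [abs_mul] at h2
    simp only [abs_two] at h2
    push_cast
    linarith

lemma dotw_add' {d : ℕ} (x y : Fin d → ℤ) (ω : Fin d → ℝ) :
    dotw (x + y) ω = dotw x ω + dotw y ω := by
  unfold dotw
  rw [← Finset.sum_add_distrib]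
  apply Finset.sum_congr rfl
  intro i _
  simp only [Pi.add_apply]
  push_cast
  ring

lemma dotw_sub' {d : ℕ} (x y : Fin d → ℤ) (ω : Fin d → ℝ) :
    dotw (x - y) ω = dotw x ω - dotw y ω := by
  unfold dotw
  rw [← Finset.sum_sub_distrib]
  apply Finset.sum_congr rfl
  intro i _
  simp only [Pi.sub_apply]
  push_cast
  ring

lemma dotwR_half' {d : ℕ} (c ctil : Fin d → ℤ) (ω : Fin d → ℝ) :
    dotwR (fun i => ((c i + ctil i : ℤ) : ℝ) / 2) ω = (dotw c ω + dotw ctil ω) / 2 := by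
  unfold dotwR dotw
  rw [← Finset.sum_add_distrib, Finset.sum_div]
  apply Finset.sum_congr rfl
  intro i _
  push_cast
  ring
set_option maxHeartbeats 1000000 in
/-- in the clustered case there is `μ ∈ {0, 1/2}` such that every `c₁ ∈ Q₁`
satisfies `‖θ* + c₁·ω + μ‖ ≤ 3δ₀^{1/2}`. Here points of `Q₁` are the half-integer points
`c₁ = (c + c̃)/2` with `c ∈ Q₀`, `c̃` its mirror image, and
`dist(σ(H_{B₁(c₁)}(θ*)), E*) < δ₁`. -/
theorem statement7 (v : ℝ → ℝ) (a : ℝ) (hv : CosLike v a) (d : ℕ) (τ γ : ℝ)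
    (hτ : (d : ℝ) < τ) (hγ : 0 < γ) :
    ∃ ε₀star > (0 : ℝ), ∀ ε₀ ε : ℝ, 0 < ε₀ → ε₀ ≤ ε₀star → 0 < ε → ε ≤ ε₀ →
      ∀ ω : Fin d → ℝ, (∀ i, ω i ∈ Set.Icc (0 : ℝ) 1) →
      (∀ x : Fin d → ℤ, x ≠ 0 → γ / (nrm1 x : ℝ) ^ τ ≤ distToInt (dotw x ω)) →
      ∀ θs Es : ℝ, ∀ cI cJ : Fin d → ℤ, cI ≠ cJ →
        |v (θs + dotw cI ω) - Es| < delta0 ε₀ →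
        |v (θs + dotw cJ ω) - Es| < delta0 ε₀ →
        -- `‖c_I − c_J‖₁` realizes the infimum `s₀`
        (∀ x y : Fin d → ℤ, x ≠ y → |v (θs + dotw x ω) - Es| < delta0 ε₀ →
          |v (θs + dotw y ω) - Es| < delta0 ε₀ → nrm1 (cI - cJ) ≤ nrm1 (x - y)) →
        -- `s₀ ≤ 10|log ε₀|²`
        (nrm1 (cI - cJ) : ℝ) ≤ 10 * |Real.log ε₀| ^ 2 →
        ∃ μ ∈ ({0, 1 / 2} : Set ℝ), ∀ c ctil : Fin d → ℤ,
          -- `c ∈ Q₀` with mirror image `c̃`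
          |v (θs + dotw c ω) - Es| < delta0 ε₀ →
          (ctil = c + (cJ - cI) ∨ ctil = c - (cJ - cI)) →
          distToInt (2 * θs + dotw (c + ctil) ω) ≤ 6 * delta0 ε₀ ^ ((1 : ℝ) / 2) →
          -- `c₁ = (c + c̃)/2 ∈ Q₁`
          (∃ μ' ∈ spectrum ℝ
              (Hmat ε v ω θs (ballR (fun i => ((c i + ctil i : ℤ) : ℝ) / 2) (ell1' ε₀))),
            |μ' - Es| < delta1' ε₀) →
          distToInt (θs + dotwR (fun i => ((c i + ctil i : ℤ) : ℝ) / 2) ω + μ)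
            ≤ 3 * delta0 ε₀ ^ ((1 : ℝ) / 2) := by
  classical
  obtain ⟨K, hK1, hlip⟩ := exists_lip hv
  have hτ0 : (0:ℝ) < τ := lt_of_le_of_lt (Nat.cast_nonneg d) hτ
  set g₀ : ℝ := min γ (3/4) with hg₀def
  have hg₀pos : 0 < g₀ := lt_min hγ (by norm_num)
  have hKpos : (0:ℝ) < K := lt_of_lt_of_le one_pos hK1
  set A : ℝ := 8 * K * (20:ℝ) ^ τ with hAdef
  have hApos : 0 < A := by
    have : (0:ℝ) < (20:ℝ) ^ τ := Real.rpow_pos_of_pos (by norm_num) _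
    rw [hAdef]; positivity
  have htend : Filter.Tendsto (fun x : ℝ => x ^ (2*τ) * Real.exp (-(1/40) * x))
      Filter.atTop (nhds 0) :=
    tendsto_rpow_mul_exp_neg_mul_atTop_nhds_zero (2*τ) (1/40) (by norm_num)
  have hlogt : Filter.Tendsto (fun ε : ℝ => -Real.log ε) (nhdsWithin 0 (Set.Ioi 0))
      Filter.atTop :=
    Filter.Tendsto.comp Filter.tendsto_neg_atBot_atTop Real.tendsto_log_nhdsGT_zero
  have hev : ∀ᶠ ε in nhdsWithin (0:ℝ) (Set.Ioi 0),
      (-Real.log ε) ^ (2*τ) * Real.exp (-(1/40) * (-Real.log ε)) < g₀ / A :=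
    Filter.Tendsto.eventually_lt_const (div_pos hg₀pos hApos) (htend.comp hlogt)
  obtain ⟨u, hu, hsub⟩ := mem_nhdsGT_iff_exists_Ioc_subset.mp hev
  refine ⟨min u (Real.exp (-1)), lt_min hu (Real.exp_pos _), ?_⟩
  intro ε₀ ε hε₀ hε₀le hε hεle ω hω hDC θs Es cI cJ hIJ hQI hQJ hmin hs0
  have hε₀u : ε₀ ≤ u := le_trans hε₀le (min_le_left _ _)
  have hε₀e : ε₀ ≤ Real.exp (-1) := le_trans hε₀le (min_le_right _ _)
  have hε₀lt1 : ε₀ < 1 := by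
    have h1 : Real.exp (-1:ℝ) < Real.exp 0 := Real.exp_lt_exp.mpr (by norm_num)
    rw [Real.exp_zero] at h1
    linarith
  have hlneg : Real.log ε₀ < 0 := Real.log_neg hε₀ hε₀lt1
  set L : ℝ := -Real.log ε₀ with hLdef
  have hL0 : 0 < L := by rw [hLdef]; linarith
  have hL1 : 1 ≤ L := by
    have := (Real.log_le_iff_le_exp hε₀).mpr hε₀e
    rw [hLdef]; linarith
  have hGE : L ^ (2*τ) * Real.exp (-(1/40) * L) < g₀ / A := hsub ⟨hε₀, hε₀u⟩
  set D := delta0 ε₀ ^ ((1:ℝ)/2) with hDdef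
  have hD40 : D = ε₀ ^ ((1:ℝ)/40) := by
    rw [hDdef]; unfold delta0; rw [← Real.rpow_mul hε₀.le]; norm_num
  have hDpos : 0 < D := by rw [hD40]; exact Real.rpow_pos_of_pos hε₀ _
  have hδ0D : delta0 ε₀ ≤ D := by
    rw [hD40]; unfold delta0
    exact Real.rpow_le_rpow_of_exponent_ge hε₀ hε₀lt1.le (by norm_num)
  have hDexp : D = Real.exp (-(1/40) * L) := by
    rw [hD40, Real.rpow_def_of_pos hε₀, hLdef]; ring_nf
  have habs : |Real.log ε₀| = L := by rw [hLdef, abs_of_neg hlneg]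
  have hrpow1 : (1:ℝ) ≤ (20 * L^2) ^ τ := by
    calc (1:ℝ) = 1 ^ τ := (Real.one_rpow τ).symm
      _ ≤ (20 * L^2) ^ τ := Real.rpow_le_rpow zero_le_one (by nlinarith) hτ0.le
  have hsplit : (20 * L^2 : ℝ) ^ τ = (20:ℝ)^τ * L ^ (2*τ) := by
    rw [Real.mul_rpow (by norm_num) (sq_nonneg L)]
    congr 1
    rw [← Real.rpow_natCast L 2, ← Real.rpow_mul hL0.le]
    norm_num
  have hbig : 8*K*D*(20*L^2)^τ < g₀ := by
    rw [hsplit, hDexp]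
    calc 8*K*Real.exp (-(1/40)*L) * ((20:ℝ)^τ * L^(2*τ))
        = A * (L^(2*τ) * Real.exp (-(1/40)*L)) := by rw [hAdef]; ring
      _ < A * (g₀ / A) := mul_lt_mul_of_pos_left hGE hApos
      _ = g₀ := by field_simp
  have hKD : 0 < 8*K*D := by positivity
  have hη34 : 8*K*D < 3/4 := by
    have hle : 8*K*D ≤ 8*K*D*(20*L^2)^τ := le_mul_of_one_le_right hKD.le hrpow1
    have h2 : g₀ ≤ 3/4 := min_le_right _ _
    linarith
  set β : ℝ := dotw (cJ - cI) ω with hβdef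
  have hcase : ∀ c ctil : Fin d → ℤ, (ctil = c + (cJ - cI) ∨ ctil = c - (cJ - cI)) →
      (θs + dotw c ω = (θs + dotwR (fun i => ((c i + ctil i : ℤ) : ℝ) / 2) ω) - β/2 ∨
       θs + dotw c ω = (θs + dotwR (fun i => ((c i + ctil i : ℤ) : ℝ) / 2) ω) + β/2) := by
    intro c ctil h
    rcases h with rfl | rfl
    · left; rw [dotwR_half', dotw_add' c (cJ - cI), hβdef]; ring
    · right; rw [dotwR_half', dotw_sub' c (cJ - cI), hβdef]; ring
  have h2t : ∀ c ctil : Fin d → ℤ,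
      2 * θs + dotw (c + ctil) ω
        = 2*(θs + dotwR (fun i => ((c i + ctil i:ℤ):ℝ)/2) ω) := by
    intro c ctil; rw [dotwR_half', dotw_add']; ring
  by_cases hP : ∀ c ctil : Fin d → ℤ,
      |v (θs + dotw c ω) - Es| < delta0 ε₀ →
      (ctil = c + (cJ - cI) ∨ ctil = c - (cJ - cI)) →
      distToInt (2 * θs + dotw (c + ctil) ω) ≤ 6 * D →
      (∃ μ' ∈ spectrum ℝ
          (Hmat ε v ω θs (ballR (fun i => ((c i + ctil i : ℤ) : ℝ) / 2) (ell1' ε₀))),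
        |μ' - Es| < delta1' ε₀) →
      distToInt (θs + dotwR (fun i => ((c i + ctil i : ℤ) : ℝ) / 2) ω + 0) ≤ 3 * D
  · exact ⟨0, Set.mem_insert _ _, hP⟩
  · push_neg at hP
    obtain ⟨c₀, ctil₀, h1₀, h2₀, h3₀, hsp₀, hbad₀⟩ := hP
    rw [add_zero] at hbad₀
    have h3₀' : distToInt (2 * (θs + dotwR (fun i => ((c₀ i + ctil₀ i:ℤ):ℝ)/2) ω))
        ≤ 2*(3*D) := by
      rw [← h2t c₀ ctil₀]; linarith
    have ht₀ : distToInt (θs + dotwR (fun i => ((c₀ i + ctil₀ i:ℤ):ℝ)/2) ω + 1/2) ≤ 3*D := by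
      rcases parity_dichotomy _ (3*D) h3₀' with hp0 | hp1
      · exact absurd hp0 (not_le.mpr hbad₀)
      · exact hp1
    have hB : |v (1/2 + β/2) - Es| ≤ delta0 ε₀ + K*(3*D) :=
      value_half hv (by linarith) hlip h1₀ (hcase c₀ ctil₀ h2₀) ht₀
    refine ⟨1/2, Set.mem_insert_of_mem _ rfl, ?_⟩
    intro c ctil h1 h2 h3 hsp
    have h3' : distToInt (2 * (θs + dotwR (fun i => ((c i + ctil i:ℤ):ℝ)/2) ω))
        ≤ 2*(3*D) := by
      rw [← h2t c ctil]; linarith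
    rcases parity_dichotomy _ (3*D) h3' with hp0 | hp1
    · exfalso
      have hA' : |v (β/2) - Es| ≤ delta0 ε₀ + K*(3*D) :=
        value0 hv (by linarith) hlip h1 (hcase c ctil h2) hp0
      have hdiff : |v (β/2) - v (1/2 + β/2)| ≤ 8*K*D := by
        have htri : |v (β/2) - v (1/2 + β/2)| ≤ |v (β/2) - Es| + |Es - v (1/2 + β/2)| :=
          abs_sub_le _ _ _
        rw [abs_sub_comm Es _] at htri
        have hKD1 : D ≤ K*D := le_mul_of_one_le_left hDpos.le hK1
        linarith
      have hq : distToInt (2*β) ≤ 8*K*D := quarter hv β (8*K*D) hη34 hdiff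
      set X : Fin d → ℤ := (cJ - cI) + (cJ - cI) with hXdef
      have hXne : X ≠ 0 := by
        intro h0
        apply hIJ
        funext i
        have hxi := congrFun h0 i
        simp only [hXdef, Pi.add_apply, Pi.sub_apply, Pi.zero_apply] at hxi
        omega
      have hdX : dotw X ω = 2*β := by rw [hXdef, dotw_add', hβdef]; ring
      have hDCX := hDC X hXne
      rw [hdX] at hDCX
      have hnrm : nrm1 X = 2 * nrm1 (cI - cJ) := by
        unfold nrm1
        rw [Finset.mul_sum]
        apply Finset.sum_congr rfl
        intro i _
        simp only [hXdef, Pi.add_apply, Pi.sub_apply]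
        rw [show cJ i - cI i + (cJ i - cI i) = 2*(cJ i - cI i) from by ring, abs_mul]
        rw [abs_sub_comm]
        norm_num
      have hn1 : (1:ℝ) ≤ (nrm1 X : ℝ) := by
        obtain ⟨i, hi⟩ := Function.ne_iff.mp hXne
        have hx1 : (1:ℤ) ≤ |X i| := Int.one_le_abs (by simpa using hi)
        have hx2 : |X i| ≤ nrm1 X := by
          unfold nrm1
          exact Finset.single_le_sum (fun j _ => abs_nonneg (X j)) (Finset.mem_univ i)
        exact_mod_cast le_trans hx1 hx2
      have hrpos : (0:ℝ) < (nrm1 X : ℝ) ^ τ := Real.rpow_pos_of_pos (by linarith) _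
      have hγle : γ ≤ 8*K*D * ((nrm1 X:ℝ) ^ τ) :=
        (div_le_iff₀ hrpos).mp (le_trans hDCX hq)
      have hnle : ((nrm1 X : ℝ)) ≤ 20 * L^2 := by
        rw [habs] at hs0
        rw [hnrm]
        push_cast
        linarith
      have hrle : ((nrm1 X:ℝ))^τ ≤ (20*L^2)^τ :=
        Real.rpow_le_rpow (by linarith) hnle hτ0.le
      have hfin : γ ≤ 8*K*D*(20*L^2)^τ :=
        le_trans hγle (mul_le_mul_of_nonneg_left hrle (by positivity))
      have hγg₀ : g₀ ≤ γ := min_le_left _ _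
      linarith
    · exact hp1
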